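/- Let s ≥ 2 and r ≥ 0 be integers. Define the monomial ideal M ⊆ ℝ[x,y] generated by x^{r−j(s−1)−m} y^{js+1+m} for all j ≥ 0 and 0 ≤ m ≤ s−2 with r − j(s−1) − m ≥ 0, together with x^{r+1} and y^{r+1+⌊r/(s−1)⌋}. Then for every d ≥ r+1, the number of monomials of degree d in M equals min(d+1, s(d−r)). -/
import Mathlib


open scoped Classical

/-- Let `s ≥ 2`, `r ≥ 0`, and let `M ⊆ ℝ[x,y]` be the monomial ideal generated by
`x^{r-j(s-1)-m} y^{js+1+m}` (for `j ≥ 0`, `0 ≤ m ≤ s-2` with `r - j(s-1) - m ≥ 0`),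
together with `x^{r+1}` and `y^{r+1+⌊r/(s-1)⌋}`.  Monomials are recorded by their exponent
pairs, `G` being the set of exponent pairs of the generators; a monomial `x^i y^{d-i}` of
degree `d` lies in `M` iff some generator divides it.  Then for every `d ≥ r+1` the number
of degree-`d` monomials in `M` equals `min (d+1) (s(d-r))`. -/
theorem stmt_15 (s r : ℕ) (hs : 2 ≤ s) (G : Set (ℕ × ℕ))
    (hG : G = {(r + 1, 0), (0, r + 1 + r / (s - 1))} ∪
      {g | ∃ j m : ℕ, m ≤ s - 2 ∧ j * (s - 1) + m ≤ r ∧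
        g = (r - (j * (s - 1) + m), j * s + 1 + m)})
    (d : ℕ) (hd : r + 1 ≤ d) :
    ((Finset.range (d + 1)).filter
        (fun i => ∃ g ∈ G, g.1 ≤ i ∧ g.2 ≤ d - i)).card = min (d + 1) (s * (d - r)) := by
  subst hG
  obtain ⟨u, rfl⟩ : ∃ u, s = u + 2 := ⟨s - 2, by omega⟩
  simp only [show u + 2 - 1 = u + 1 from rfl, show u + 2 - 2 = u from rfl]
  set e := d - r with he
  have hed : d = r + e := by omega
  have he1 : 1 ≤ e := by omega
  set q := r / (u + 1) with hq
  set m0 := r % (u + 1) with hm0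
  have hmod : (u + 1) * q + m0 = r := Nat.div_add_mod r (u + 1)
  have hmodlt : m0 < u + 1 := Nat.mod_lt r (by omega)
  set P := e * (u + 1) with hP
  have key : ((Finset.range (d + 1)).filter
      (fun i => ∃ g ∈ ({(r + 1, 0), (0, r + 1 + q)} ∪
        {g : ℕ × ℕ | ∃ j m : ℕ, m ≤ u ∧ j * (u + 1) + m ≤ r ∧
          g = (r - (j * (u + 1) + m), j * (u + 2) + 1 + m)} : Set (ℕ × ℕ)),
        g.1 ≤ i ∧ g.2 ≤ d - i)) = Finset.Icc (r + 1 - P) d := by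
    ext i
    simp only [Finset.mem_filter, Finset.mem_range, Finset.mem_Icc,
      Set.mem_union, Set.mem_insert_iff, Set.mem_singleton_iff, Set.mem_setOf_eq]
    constructor
    · rintro ⟨hi, g, ((rfl | rfl) | ⟨j, m, hm, hjm, rfl⟩), h1, h2⟩
      · dsimp only at h1 h2
        refine ⟨?_, by omega⟩
        rw [tsub_le_iff_right]
        omega
      · dsimp only at h1 h2
        have hid : i ≤ d := by omega
        have hsc := Nat.sub_add_cancel hid
        have h2' : r + 1 + q + i ≤ d := by linarith
        have hqe : q + 1 ≤ e := by linarith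
        have hPge : (q + 1) * (u + 1) ≤ P := by
          rw [hP]; exact Nat.mul_le_mul_right _ hqe
        have hexp : (q + 1) * (u + 1) = q * (u + 1) + u + 1 := by ring
        have hcm : (u + 1) * q = q * (u + 1) := Nat.mul_comm _ _
        refine ⟨?_, hid⟩
        rw [tsub_le_iff_right]
        linarith
      · dsimp only at h1 h2
        have hid : i ≤ d := by omega
        have hsc := Nat.sub_add_cancel hid
        have h2' : j * (u + 2) + 1 + m + i ≤ d := by linarith
        have h1' : r ≤ i + (j * (u + 1) + m) := by
          have := Nat.sub_le_iff_le_add.mp h1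
          linarith
        have hBA : j * (u + 2) = j * (u + 1) + j := by ring
        have hje : j + 1 ≤ e := by
          rw [hed] at h2'
          linarith
        have hPge : (j + 1) * (u + 1) ≤ P := by
          rw [hP]; exact Nat.mul_le_mul_right _ hje
        have hexp : (j + 1) * (u + 1) = j * (u + 1) + u + 1 := by ring
        refine ⟨?_, hid⟩
        rw [tsub_le_iff_right]
        linarith
    · rintro ⟨h1, h2⟩
      refine ⟨by omega, ?_⟩
      by_cases hir : r + 1 ≤ i
      · exact ⟨(r + 1, 0), Or.inl (Or.inl rfl), hir, Nat.zero_le _⟩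
      · push_neg at hir
        have hir' : i ≤ r := by omega
        set k := r - i with hk
        have hki : k + i = r := by omega
        have hL' : r + 1 ≤ i + P := by
          have := tsub_le_iff_right.mp h1
          linarith
        have hklt : k < P := by omega
        set j := k / (u + 1) with hj
        set mm := k % (u + 1) with hmm
        have hdm : (u + 1) * j + mm = k := Nat.div_add_mod k (u + 1)
        have hmmlt : mm < u + 1 := Nat.mod_lt k (by omega)
        have hcm : (u + 1) * j = j * (u + 1) := Nat.mul_comm _ _
        have hjP : j * (u + 1) ≤ k := by omega
        have hje : j + 1 ≤ e := by
          by_contra hc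
          push_neg at hc
          have : e ≤ j := by omega
          have : e * (u + 1) ≤ j * (u + 1) := Nat.mul_le_mul_right _ this
          omega
        have hkr : j * (u + 1) + mm ≤ r := by omega
        have hBA : j * (u + 2) = j * (u + 1) + j := by ring
        refine ⟨(r - (j * (u + 1) + mm), j * (u + 2) + 1 + mm),
          Or.inr ⟨j, mm, by omega, hkr, rfl⟩, ?_, ?_⟩
        · dsimp only
          omega
        · dsimp only
          rw [Nat.le_sub_iff_add_le (by omega : i ≤ d)]
          omega
  rw [key, Nat.card_Icc]
  have hse : (u + 2) * e = P + e := by rw [hP]; ring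
  rw [hse]
  omega
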